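/- arXiv:1905.10030 — 2 statements merged into one kernel-verified Lean document; each statement's English description precedes it below -/
import Mathlib

section
/- Let L : [0,∞) → (0,∞) be slowly varying at infinity and bounded on every bounded interval, let κ ≥ 1 be an integer and α > 0 with ακ < 2, and let Δ ⊂ ℝ² be a bounded measurable set of positive Lebesgue measure. Then there exist constants C > 0 and r₀ > 0 such that for all r > r₀, ∫_Δ ∫_Δ L(r ‖u − v‖)^κ ‖u − v‖^{−ακ} du dv ≤ C L(r)^κ. -/
open MeasureTheory Filter Topology
open Set Metric ENNReal

local notation "E2" => EuclideanSpace ℝ (Fin 2)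

lemma svdib_uct (h : ℝ → ℝ) (hm : Measurable h)
    (hc : ∀ u : ℝ, Tendsto (fun x => h (x + u) - h x) atTop (𝓝 0)) :
    ∀ ε > (0 : ℝ), ∃ X : ℝ, ∀ x ≥ X, ∀ u ∈ Set.Icc (0:ℝ) 1, |h (x + u) - h x| ≤ ε := by
  intro ε hε
  by_contra hcon
  push_neg at hcon
  -- hcon : ∀ X, ∃ x ≥ X, ∃ u ∈ Icc 0 1, ε < |h (x + u) - h x|
  choose xf hxf uf huf hgt using hcon
  set x : ℕ → ℝ := fun n => xf (n : ℝ) with hxdef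
  set u : ℕ → ℝ := fun n => uf (n : ℝ) with hudef
  have hxge : ∀ n : ℕ, (n : ℝ) ≤ x n := fun n => hxf _
  have hxtop : Tendsto x atTop atTop :=
    tendsto_atTop_mono hxge tendsto_natCast_atTop_atTop
  have hu01 : ∀ n, u n ∈ Set.Icc (0:ℝ) 1 := fun n => huf _
  -- the two families of good sets
  set A : ℕ → Set ℝ := fun n =>
    Set.Icc (0:ℝ) 2 ∩ ⋂ m ∈ {m : ℕ | n ≤ m}, {w : ℝ | |h (x m + w) - h (x m)| ≤ ε/2} with hAdef
  set B : ℕ → Set ℝ := fun n =>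
    Set.Icc (0:ℝ) 2 ∩ ⋂ m ∈ {m : ℕ | n ≤ m}, {w : ℝ | |h (x m + u m + w) - h (x m + u m)| ≤ ε/2}
    with hBdef
  have hmw : ∀ c : ℝ, Measurable fun w : ℝ => |h (c + w) - h c| := by
    intro c
    exact ((hm.comp (measurable_const_add c)).sub measurable_const).abs
  have hAmeas : ∀ n, MeasurableSet (A n) := by
    intro n
    exact measurableSet_Icc.inter (MeasurableSet.biInter (to_countable _)
      fun m _ => measurableSet_le (hmw (x m)) measurable_const)
  have hBmeas : ∀ n, MeasurableSet (B n) := by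
    intro n
    exact measurableSet_Icc.inter (MeasurableSet.biInter (to_countable _)
      fun m _ => measurableSet_le (hmw (x m + u m)) measurable_const)
  have hAmono : Monotone A := by
    intro a b hab
    refine inter_subset_inter le_rfl (biInter_mono ?_ fun m _ => le_rfl)
    intro m hm'; exact le_trans hab hm'
  have hBmono : Monotone B := by
    intro a b hab
    refine inter_subset_inter le_rfl (biInter_mono ?_ fun m _ => le_rfl)
    intro m hm'; exact le_trans hab hm'
  have hAunion : ⋃ n, A n = Set.Icc (0:ℝ) 2 := by
    apply Set.Subset.antisymm (iUnion_subset fun n => inter_subset_left)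
    intro w hw
    have hev : ∀ᶠ n in atTop, |h (x n + w) - h (x n)| ≤ ε/2 := by
      have h2 := ((hc w).comp hxtop) (Metric.closedBall_mem_nhds 0 (by positivity : (0:ℝ) < ε/2))
      filter_upwards [h2] with n hn
      simpa [Real.dist_eq] using hn
    obtain ⟨N, hN⟩ := hev.exists_forall_of_atTop
    exact mem_iUnion.mpr ⟨N, hw, mem_biInter fun m hm' => hN m hm'⟩
  have hBunion : ⋃ n, B n = Set.Icc (0:ℝ) 2 := by
    apply Set.Subset.antisymm (iUnion_subset fun n => inter_subset_left)
    intro w hw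
    have hxutop : Tendsto (fun n => x n + u n) atTop atTop := by
      apply tendsto_atTop_mono (fun n => ?_) tendsto_natCast_atTop_atTop
      have := (hu01 n).1
      have := hxge n
      linarith
    have hev : ∀ᶠ n in atTop, |h (x n + u n + w) - h (x n + u n)| ≤ ε/2 := by
      have h2 := ((hc w).comp hxutop) (Metric.closedBall_mem_nhds 0 (by positivity : (0:ℝ) < ε/2))
      filter_upwards [h2] with n hn
      simpa [Real.dist_eq] using hn
    obtain ⟨N, hN⟩ := hev.exists_forall_of_atTop
    exact mem_iUnion.mpr ⟨N, hw, mem_biInter fun m hm' => hN m hm'⟩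
  -- measure convergence
  have hIcc2 : volume (Set.Icc (0:ℝ) 2) = ENNReal.ofReal 2 := by
    rw [Real.volume_Icc]; norm_num
  have hAN : ∃ N₁, ENNReal.ofReal (7/4) < volume (A N₁) := by
    have ht := tendsto_measure_iUnion_atTop (μ := volume) hAmono
    rw [hAunion, hIcc2] at ht
    have := ht.eventually (lt_mem_nhds (by
      rw [ENNReal.ofReal_lt_ofReal_iff] <;> norm_num :
      ENNReal.ofReal (7/4) < ENNReal.ofReal 2))
    exact this.exists
  have hBN : ∃ N₂, ENNReal.ofReal (7/4) < volume (B N₂) := by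
    have ht := tendsto_measure_iUnion_atTop (μ := volume) hBmono
    rw [hBunion, hIcc2] at ht
    have := ht.eventually (lt_mem_nhds (by
      rw [ENNReal.ofReal_lt_ofReal_iff] <;> norm_num :
      ENNReal.ofReal (7/4) < ENNReal.ofReal 2))
    exact this.exists
  obtain ⟨N₁, hN₁⟩ := hAN
  obtain ⟨N₂, hN₂⟩ := hBN
  set N : ℕ := max N₁ N₂ with hNdef
  have hvolA : ENNReal.ofReal (7/4) < volume (A N) :=
    lt_of_lt_of_le hN₁ (measure_mono (hAmono (le_max_left _ _)))
  have hvolB : ENNReal.ofReal (7/4) < volume (B N) :=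
    lt_of_lt_of_le hN₂ (measure_mono (hBmono (le_max_right _ _)))
  set a : ℝ := u N with hadef
  have ha0 : 0 ≤ a := (hu01 N).1
  have ha1 : a ≤ 1 := (hu01 N).2
  set S₁ : Set ℝ := B N ∩ Set.Icc 0 1 with hS₁def
  set S₂ : Set ℝ := (fun w => a + w) ⁻¹' (A N) ∩ Set.Icc 0 1 with hS₂def
  have hS₁meas : MeasurableSet S₁ := (hBmeas N).inter measurableSet_Icc
  have hS₂meas : MeasurableSet S₂ :=
    ((hAmeas N).preimage (measurable_const_add a)).inter measurableSet_Icc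
  -- lower bound on the measure of S₁
  have hS₁vol : ENNReal.ofReal (3/4) < volume S₁ := by
    by_contra hcon'
    push_neg at hcon'
    have hsub : B N ⊆ S₁ ∪ Set.Ioc 1 2 := by
      intro w hw
      rcases le_or_gt w 1 with hw1 | hw1
      · exact Or.inl ⟨hw, (hw.1 : w ∈ Set.Icc (0:ℝ) 2).1, hw1⟩
      · exact Or.inr ⟨hw1, (hw.1 : w ∈ Set.Icc (0:ℝ) 2).2⟩
    have : volume (B N) ≤ volume S₁ + volume (Set.Ioc (1:ℝ) 2) :=
      (measure_mono hsub).trans (measure_union_le _ _)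
    rw [Real.volume_Ioc] at this
    have h21 : ENNReal.ofReal (2 - 1) = ENNReal.ofReal 1 := by norm_num
    have : volume (B N) ≤ ENNReal.ofReal (3/4) + ENNReal.ofReal 1 :=
      this.trans (by rw [h21]; exact add_le_add hcon' le_rfl)
    rw [← ENNReal.ofReal_add (by norm_num) (by norm_num)] at this
    have h74 : (3/4 : ℝ) + 1 = 7/4 := by norm_num
    rw [h74] at this
    exact absurd (lt_of_lt_of_le hvolB this) (lt_irrefl _)
  -- lower bound on the measure of S₂
  have hS₂eq : volume S₂ = volume (A N ∩ Set.Icc a (1+a)) := by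
    have : S₂ = (fun w => a + w) ⁻¹' (A N ∩ Set.Icc a (1+a)) := by
      ext w
      simp only [hS₂def, mem_inter_iff, mem_preimage, Set.mem_Icc]
      constructor
      · rintro ⟨hA, hw0, hw1⟩; exact ⟨hA, by linarith, by linarith⟩
      · rintro ⟨hA, hw0, hw1⟩; exact ⟨hA, by linarith, by linarith⟩
    rw [this, measure_preimage_add]
  have hS₂vol : ENNReal.ofReal (3/4) < volume S₂ := by
    rw [hS₂eq]
    by_contra hcon'
    push_neg at hcon'
    have hsub : A N ⊆ (A N ∩ Set.Icc a (1+a)) ∪ (Set.Ico 0 a ∪ Set.Ioc (1+a) 2) := by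
      intro w hw
      have hw02 : w ∈ Set.Icc (0:ℝ) 2 := hw.1
      rcases lt_or_ge w a with hwa | hwa
      · exact Or.inr (Or.inl ⟨hw02.1, hwa⟩)
      rcases le_or_gt w (1+a) with hwb | hwb
      · exact Or.inl ⟨hw, hwa, hwb⟩
      · exact Or.inr (Or.inr ⟨hwb, hw02.2⟩)
    have hb : volume (A N) ≤ volume (A N ∩ Set.Icc a (1+a)) +
        (volume (Set.Ico (0:ℝ) a) + volume (Set.Ioc (1+a) 2)) :=
      (measure_mono hsub).trans ((measure_union_le _ _).trans
      (add_le_add le_rfl (measure_union_le _ _)))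
    rw [Real.volume_Ico, Real.volume_Ioc, sub_zero,
      ← ENNReal.ofReal_add ha0 (by linarith)] at hb
    have heq1 : a + (2 - (1+a)) = 1 := by ring
    rw [heq1] at hb
    have : volume (A N) ≤ ENNReal.ofReal (3/4) + ENNReal.ofReal 1 :=
      hb.trans (add_le_add hcon' le_rfl)
    rw [← ENNReal.ofReal_add (by norm_num) (by norm_num)] at this
    have h74 : (3/4 : ℝ) + 1 = 7/4 := by norm_num
    rw [h74] at this
    exact absurd (lt_of_lt_of_le hvolA this) (lt_irrefl _)
  -- S₁ ∩ S₂ nonempty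
  have hnon : (S₁ ∩ S₂).Nonempty := by
    rw [nonempty_iff_ne_empty]
    intro hemp
    have hkey : volume (S₁ ∪ S₂) + volume (S₁ ∩ S₂) = volume S₁ + volume S₂ :=
      measure_union_add_inter S₁ hS₂meas
    rw [hemp, measure_empty, add_zero] at hkey
    have hle : volume (S₁ ∪ S₂) ≤ ENNReal.ofReal 1 := by
      have hss : S₁ ∪ S₂ ⊆ Set.Icc (0:ℝ) 1 := union_subset inter_subset_right inter_subset_right
      have h2 : volume (S₁ ∪ S₂) ≤ volume (Set.Icc (0:ℝ) 1) := measure_mono hss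
      rwa [Real.volume_Icc, sub_zero] at h2
    rw [hkey] at hle
    have hgt' : ENNReal.ofReal (3/4) + ENNReal.ofReal (3/4) ≤ volume S₁ + volume S₂ :=
      add_le_add hS₁vol.le hS₂vol.le
    rw [← ENNReal.ofReal_add (by norm_num) (by norm_num)] at hgt'
    have : ENNReal.ofReal (3/4 + 3/4) ≤ ENNReal.ofReal 1 := hgt'.trans hle
    rw [ENNReal.ofReal_le_ofReal_iff (by norm_num)] at this
    norm_num at this
  obtain ⟨w, hwS₁, hwS₂⟩ := hnon
  -- derive the contradiction
  have hwB : |h (x N + u N + w) - h (x N + u N)| ≤ ε/2 := by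
    have := hwS₁.1
    have hmem := mem_iInter₂.mp this.2 N (le_refl N)
    exact hmem
  have hwA : |h (x N + (a + w)) - h (x N)| ≤ ε/2 := by
    have := hwS₂.1
    have hmem := mem_iInter₂.mp (mem_preimage.mp this).2 N (le_refl N)
    exact hmem
  have htri := abs_sub_le (h (x N + a)) (h (x N + a + w)) (h (x N))
  have hassoc : x N + a + w = x N + (a + w) := by ring
  have hfinal : |h (x N + a) - h (x N)| ≤ ε := by
    have h1 : |h (x N + a) - h (x N + a + w)| ≤ ε/2 := by
      rw [abs_sub_comm]
      simpa [hadef] using hwB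
    have h2 : |h (x N + a + w) - h (x N)| ≤ ε/2 := by rw [hassoc]; exact hwA
    linarith
  have := hgt (N : ℝ)
  rw [show xf (N:ℝ) = x N from rfl, show uf (N:ℝ) = u N from rfl] at this
  rw [hadef] at hfinal
  linarith [this, hfinal]

lemma svdib_chain (h : ℝ → ℝ) {ε X : ℝ} (hε : 0 < ε)
    (H : ∀ x ≥ X, ∀ u ∈ Set.Icc (0:ℝ) 1, |h (x + u) - h x| ≤ ε) :
    ∀ x ≥ X, ∀ y ≥ x, |h y - h x| ≤ ε * (y - x + 1) := by
  have key : ∀ n : ℕ, ∀ x ≥ X, ∀ y : ℝ, x + n ≤ y → y ≤ x + n + 1 →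
      |h y - h x| ≤ ε * (n + 1) := by
    intro n
    induction n with
    | zero =>
      intro x hx y hy1 hy2
      have h1 : y - x ∈ Set.Icc (0:ℝ) 1 := by
        constructor <;> [skip; skip] <;> push_cast at hy1 hy2 <;> linarith
      have := H x hx (y - x) h1
      rw [show x + (y - x) = y by ring] at this
      simpa using this
    | succ n ih =>
      intro x hx y hy1 hy2
      push_cast at hy1 hy2
      have hx1 : x + 1 ≥ X := by linarith
      have h1 := ih (x + 1) hx1 y (by push_cast; linarith) (by push_cast; linarith)
      have h2 := H x hx 1 (by norm_num)
      have htri := abs_sub_le (h y) (h (x+1)) (h x)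
      push_cast
      linarith [abs_nonneg (h y - h (x+1))]
  intro x hx y hy
  set n : ℕ := ⌊y - x⌋₊ with hn
  have hyx : 0 ≤ y - x := by linarith
  have h1 : (n : ℝ) ≤ y - x := Nat.floor_le hyx
  have h2 : y - x < n + 1 := Nat.lt_floor_add_one _
  have := key n x hx y (by linarith) (by linarith)
  have : |h y - h x| ≤ ε * (n + 1) := this
  calc |h y - h x| ≤ ε * (n + 1) := this
    _ ≤ ε * (y - x + 1) := by
        apply mul_le_mul_of_nonneg_left _ hε.le
        linarith

lemma svdib_potter (L : ℝ → ℝ) (hLpos : ∀ x ≥ (0 : ℝ), 0 < L x) (hLmeas : Measurable L)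
    (hLslow : ∀ t > (0 : ℝ), Tendsto (fun r : ℝ => L (t * r) / L r) atTop (𝓝 1))
    {ε : ℝ} (hε : 0 < ε) :
    ∃ R ≥ (1:ℝ), ∀ r ≥ R, ∀ s ≥ R, L s ≤ Real.exp ε * L r * max (s/r) (r/s) ^ ε := by
  set h : ℝ → ℝ := fun x => Real.log (L (Real.exp x)) with hdef
  have hm : Measurable h := (hLmeas.comp Real.measurable_exp).log
  have hc : ∀ u : ℝ, Tendsto (fun x => h (x + u) - h x) atTop (𝓝 0) := by
    intro u
    have h1 : Tendsto (fun r : ℝ => L (Real.exp u * r) / L r) atTop (𝓝 1) :=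
      hLslow _ (Real.exp_pos u)
    have h2 : Tendsto (fun x : ℝ => L (Real.exp u * Real.exp x) / L (Real.exp x)) atTop (𝓝 1) :=
      h1.comp Real.tendsto_exp_atTop
    have h3 : Tendsto (fun x : ℝ => Real.log (L (Real.exp u * Real.exp x) / L (Real.exp x)))
        atTop (𝓝 0) := by
      have := (Real.continuousAt_log one_ne_zero).tendsto
      rw [Real.log_one] at this
      exact this.comp h2
    apply h3.congr
    intro x
    rw [Real.log_div (hLpos _ (mul_pos (Real.exp_pos u) (Real.exp_pos x)).le).ne'
      (hLpos _ (Real.exp_pos x).le).ne', hdef]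
    simp only [← Real.exp_add]
    rw [add_comm u x]
  obtain ⟨X, hX⟩ := svdib_uct h hm hc ε hε
  have hchain := svdib_chain h hε hX
  refine ⟨max 1 (Real.exp X), le_max_left _ _, ?_⟩
  intro r hr s hs
  have hr1 : (1:ℝ) ≤ r := le_trans (le_max_left _ _) hr
  have hs1 : (1:ℝ) ≤ s := le_trans (le_max_left _ _) hs
  have hr0 : 0 < r := lt_of_lt_of_le one_pos hr1
  have hs0 : 0 < s := lt_of_lt_of_le one_pos hs1
  have hrX : X ≤ Real.log r := by
    rw [← Real.log_exp X]
    exact Real.log_le_log (Real.exp_pos X) (le_trans (le_max_right _ _) hr)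
  have hsX : X ≤ Real.log s := by
    rw [← Real.log_exp X]
    exact Real.log_le_log (Real.exp_pos X) (le_trans (le_max_right _ _) hs)
  -- |h (log s) - h (log r)| ≤ ε * (|log s - log r| + 1)
  have habs : |h (Real.log s) - h (Real.log r)| ≤ ε * (|Real.log s - Real.log r| + 1) := by
    rcases le_total (Real.log r) (Real.log s) with hle | hle
    · have := hchain (Real.log r) hrX (Real.log s) hle
      rwa [abs_of_nonneg (by linarith : (0:ℝ) ≤ Real.log s - Real.log r)]
    · have := hchain (Real.log s) hsX (Real.log r) hle
      rw [abs_sub_comm, abs_of_nonpos (by linarith : Real.log s - Real.log r ≤ 0)]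
      simpa [abs_sub_comm] using this
  have hhr : h (Real.log r) = Real.log (L r) := by rw [hdef]; simp [Real.exp_log hr0]
  have hhs : h (Real.log s) = Real.log (L s) := by rw [hdef]; simp [Real.exp_log hs0]
  have hLr : 0 < L r := hLpos r hr0.le
  have hLs : 0 < L s := hLpos s hs0.le
  -- exponentiate
  have hexp0 : Real.log (L s) - Real.log (L r) ≤ ε * |Real.log s - Real.log r| + ε := by
    have := (abs_le.mp habs).2
    rw [hhr, hhs] at habs
    nlinarith [(abs_le.mp habs).2]
  have hmax : Real.exp (|Real.log s - Real.log r|) = max (s/r) (r/s) := by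
    rcases le_total (Real.log r) (Real.log s) with hle | hle
    · have hrs : r ≤ s := by
        rwa [Real.log_le_log_iff hr0 hs0] at hle
      rw [abs_of_nonneg (by linarith), Real.exp_sub, Real.exp_log hr0, Real.exp_log hs0,
        max_eq_left]
      calc r/s ≤ 1 := by rw [div_le_one hs0]; exact hrs
        _ ≤ s/r := by rw [le_div_iff₀ hr0]; linarith
    · have hrs : s ≤ r := by
        rwa [Real.log_le_log_iff hs0 hr0] at hle
      rw [abs_of_nonpos (by linarith), neg_sub, Real.exp_sub, Real.exp_log hr0, Real.exp_log hs0,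
        max_eq_right]
      calc s/r ≤ 1 := by rw [div_le_one hr0]; exact hrs
        _ ≤ r/s := by rw [le_div_iff₀ hs0]; linarith
  have hMpow : max (s/r) (r/s) ^ ε = Real.exp (ε * |Real.log s - Real.log r|) := by
    rw [← hmax, ← Real.exp_mul, mul_comm]
  rw [hMpow]
  calc L s = Real.exp (Real.log (L s)) := (Real.exp_log hLs).symm
    _ ≤ Real.exp (Real.log (L r) + (ε * |Real.log s - Real.log r| + ε)) := by
        apply Real.exp_le_exp.mpr
        linarith
    _ = Real.exp ε * L r * Real.exp (ε * |Real.log s - Real.log r|) := by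
        rw [Real.exp_add, Real.exp_add, Real.exp_log hLr]
        ring

lemma svdib_ballint {β : ℝ} (hβ0 : 0 < β) (hβ2 : β < 2) {η : ℝ} (hη : 0 < η) :
    ∫⁻ x in closedBall (0 : E2) η, ENNReal.ofReal (‖x‖ ^ (-β)) ≤
      ENNReal.ofReal ((volume (closedBall (0 : E2) 1)).toReal * (2/(2-β)) * η ^ (2-β)) := by
  set B : ℝ≥0∞ := volume (closedBall (0 : E2) 1) with hBdef
  have hBfin : B ≠ ∞ := measure_closedBall_lt_top.ne
  have hBr : B = ENNReal.ofReal B.toReal := (ENNReal.ofReal_toReal hBfin).symm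
  have hB0 : 0 ≤ B.toReal := ENNReal.toReal_nonneg
  have h2β : (2 : ℝ) - β ≠ 0 := by linarith
  have hexp : (-2/β : ℝ) < -1 := by rw [div_lt_iff₀ hβ0]; linarith
  have hballvol : ∀ ρ : ℝ, 0 ≤ ρ → volume (closedBall (0 : E2) ρ) = ENNReal.ofReal (ρ ^ 2) * B := by
    intro ρ hρ
    rw [Measure.addHaar_closedBall' volume (0 : E2) hρ, finrank_euclideanSpace_fin]
  have f_mble : Measurable fun x : E2 => ‖x‖ ^ (-β) := measurable_norm.pow_const _
  have lc := lintegral_eq_lintegral_meas_lt (volume.restrict (closedBall (0:E2) η))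
      (f := fun x : E2 => ‖x‖ ^ (-β))
      (Filter.Eventually.of_forall fun x => Real.rpow_nonneg (norm_nonneg x) _)
      f_mble.aemeasurable
  rw [lc]
  set T : ℝ := η ^ (-β) with hTdef
  have hT0 : 0 < T := Real.rpow_pos_of_pos hη _
  have meas_bd1 : ∀ t : ℝ, (volume.restrict (closedBall (0:E2) η)) {x : E2 | t < ‖x‖ ^ (-β)} ≤
      ENNReal.ofReal (η ^ 2) * B := by
    intro t
    calc (volume.restrict (closedBall (0:E2) η)) {x : E2 | t < ‖x‖ ^ (-β)}
        ≤ (volume.restrict (closedBall (0:E2) η)) univ := measure_mono (subset_univ _)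
      _ ≤ volume (closedBall (0:E2) η) := by rw [Measure.restrict_apply_univ]
      _ = ENNReal.ofReal (η ^ 2) * B := hballvol η hη.le
  have meas_bd2 : ∀ t : ℝ, 0 < t → (volume.restrict (closedBall (0:E2) η)) {x : E2 | t < ‖x‖ ^ (-β)} ≤
      ENNReal.ofReal (t ^ (-2/β)) * B := by
    intro t ht
    have hsub : {x : E2 | t < ‖x‖ ^ (-β)} ⊆ closedBall (0:E2) (t ^ (-1/β)) := by
      intro x hx
      simp only [mem_setOf_eq] at hx
      rcases eq_or_lt_of_le (norm_nonneg x) with h0 | h0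
      · simp only [mem_closedBall, dist_zero_right, ← h0]
        positivity
      · have h1 : (‖x‖ ^ (-β)) ^ (-1/β) < t ^ (-1/β) := by
          apply Real.rpow_lt_rpow_of_neg ht hx
          rw [neg_div]
          exact neg_neg_iff_pos.mpr (by positivity)
        rw [← Real.rpow_mul (le_of_lt h0),
          show -β * (-1/β) = 1 by field_simp, Real.rpow_one] at h1
        exact mem_closedBall.mpr (by rw [dist_zero_right]; exact h1.le)
    calc (volume.restrict (closedBall (0:E2) η)) {x : E2 | t < ‖x‖ ^ (-β)}
        ≤ volume {x : E2 | t < ‖x‖ ^ (-β)} := Measure.restrict_apply_le _ _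
      _ ≤ volume (closedBall (0:E2) (t ^ (-1/β))) := measure_mono hsub
      _ = ENNReal.ofReal ((t ^ (-1/β)) ^ 2) * B := hballvol _ (Real.rpow_nonneg ht.le _)
      _ = ENNReal.ofReal (t ^ (-2/β)) * B := by
          rw [← Real.rpow_natCast (t ^ (-1/β)) 2, ← Real.rpow_mul ht.le,
            show (-1/β) * ((2:ℕ):ℝ) = -2/β by push_cast; ring]
  have hsplit : (Ioi (0:ℝ)) = Ioc 0 T ∪ Ioi T := (Ioc_union_Ioi_eq_Ioi hT0.le).symm
  rw [hsplit, lintegral_union measurableSet_Ioi Ioc_disjoint_Ioi_same]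
  have part1 : ∫⁻ t in Ioc (0:ℝ) T, (volume.restrict (closedBall (0:E2) η)) {x : E2 | t < ‖x‖ ^ (-β)} ≤
      ENNReal.ofReal (η ^ 2) * B * ENNReal.ofReal T := by
    calc ∫⁻ t in Ioc (0:ℝ) T, (volume.restrict (closedBall (0:E2) η)) {x : E2 | t < ‖x‖ ^ (-β)}
        ≤ ∫⁻ _ in Ioc (0:ℝ) T, (ENNReal.ofReal (η ^ 2) * B) :=
          lintegral_mono fun t => meas_bd1 t
      _ = ENNReal.ofReal (η ^ 2) * B * volume (Ioc (0:ℝ) T) := setLIntegral_const _ _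
      _ = ENNReal.ofReal (η ^ 2) * B * ENNReal.ofReal T := by
          rw [Real.volume_Ioc, sub_zero]
  have hTpow : -T ^ (-2/β + 1) / (-2/β + 1) = η ^ (2-β) * (β/(2-β)) := by
    rw [hTdef, ← Real.rpow_mul hη.le,
      (by field_simp; ring : -β * (-2/β + 1) = 2 - β)]
    have hne : (-2:ℝ) + β ≠ 0 := (by linarith : (-2:ℝ) + β < 0).ne
    field_simp [hne]
    ring
  have part2 : ∫⁻ t in Ioi T, (volume.restrict (closedBall (0:E2) η)) {x : E2 | t < ‖x‖ ^ (-β)} ≤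
      ENNReal.ofReal (η ^ (2-β) * (β/(2-β))) * B := by
    have hint : IntegrableOn (fun t : ℝ => t ^ (-2/β)) (Ioi T) := integrableOn_Ioi_rpow_of_lt hexp hT0
    calc ∫⁻ t in Ioi T, (volume.restrict (closedBall (0:E2) η)) {x : E2 | t < ‖x‖ ^ (-β)}
        ≤ ∫⁻ t in Ioi T, ENNReal.ofReal (t ^ (-2/β)) * B :=
          setLIntegral_mono' measurableSet_Ioi fun t ht => meas_bd2 t (hT0.trans ht)
      _ = (∫⁻ t in Ioi T, ENNReal.ofReal (t ^ (-2/β))) * B := lintegral_mul_const' B _ hBfin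
      _ = ENNReal.ofReal (∫ t in Ioi T, t ^ (-2/β)) * B := by
          rw [← ofReal_integral_eq_lintegral_ofReal hint
            ((ae_restrict_iff' measurableSet_Ioi).mpr (Filter.Eventually.of_forall
              fun t ht => Real.rpow_nonneg (le_of_lt (hT0.trans ht)) _))]
      _ = ENNReal.ofReal (η ^ (2-β) * (β/(2-β))) * B := by
          rw [integral_Ioi_rpow_of_lt hexp hT0, hTpow]
  calc _ ≤ ENNReal.ofReal (η ^ 2) * B * ENNReal.ofReal T + ENNReal.ofReal (η ^ (2-β) * (β/(2-β))) * B :=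
        add_le_add part1 part2
    _ = ENNReal.ofReal ((volume (closedBall (0 : E2) 1)).toReal * (2/(2-β)) * η ^ (2-β)) := by
        have h2β' : (0:ℝ) < 2 - β := by linarith
        rw [hBr]
        rw [← ENNReal.ofReal_mul (by positivity), ← ENNReal.ofReal_mul (by positivity),
          ← ENNReal.ofReal_mul (mul_nonneg (Real.rpow_nonneg hη.le _)
            (div_nonneg hβ0.le h2β'.le)),
          ← ENNReal.ofReal_add (by positivity) (mul_nonneg (mul_nonneg
            (Real.rpow_nonneg hη.le _) (div_nonneg hβ0.le h2β'.le)) hB0),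
          ← hBdef]
        congr 1
        rw [hTdef, ← Real.rpow_natCast η 2]
        have hmul : η ^ ((2:ℕ):ℝ) * η ^ (-β) = η ^ (2-β) := by
          rw [← Real.rpow_add hη, (by push_cast; ring : ((2:ℕ):ℝ) + -β = 2 - β)]
        rw [mul_right_comm (η ^ ((2:ℕ):ℝ)) B.toReal (η ^ (-β)), hmul]
        field_simp
        ring

lemma svdib_translate (u : E2) (ρ : ℝ) (g : ℝ → ℝ≥0∞) (hg : Measurable g) :
    ∫⁻ v in closedBall u ρ, g (dist u v) = ∫⁻ x in closedBall (0 : E2) ρ, g ‖x‖ := by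
  have hmp : MeasurePreserving (fun x : E2 => u + x) volume volume :=
    measurePreserving_add_left volume u
  have hf : Measurable fun v : E2 => g (dist u v) :=
    hg.comp (measurable_const.dist measurable_id)
  have key := hmp.setLIntegral_comp_preimage (measurableSet_closedBall (x := u) (ε := ρ)) hf
  have hpre : (fun x : E2 => u + x) ⁻¹' closedBall u ρ = closedBall (0 : E2) ρ := by
    ext x
    simp [mem_closedBall, dist_eq_norm]
  rw [← key, hpre]
  refine setLIntegral_congr_fun measurableSet_closedBall ?_
  intro x _
  dsimp only
  congr 1
  simp [dist_eq_norm]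

set_option maxHeartbeats 1000000 in
/-- For a slowly varying function `L`, locally bounded and positive, an integer `κ ≥ 1`
and `α > 0` with `ακ < 2`, and a bounded measurable `Δ ⊂ ℝ²` of positive measure,
there are `C > 0` and `r₀ > 0` such that for all `r > r₀`,
`∫_Δ ∫_Δ L(r‖u−v‖)^κ ‖u−v‖^{−ακ} du dv ≤ C L(r)^κ`. -/
theorem slowly_varying_double_integral_bound
    (L : ℝ → ℝ) (hLpos : ∀ x ≥ (0 : ℝ), 0 < L x) (hLmeas : Measurable L)
    (hLslow : ∀ t > (0 : ℝ), Tendsto (fun r : ℝ => L (t * r) / L r) atTop (𝓝 1))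
    (hLloc : ∀ T > (0 : ℝ), ∃ M : ℝ, ∀ x ∈ Set.Icc (0 : ℝ) T, L x ≤ M)
    (κ : ℕ) (hκ : 1 ≤ κ) (α : ℝ) (hα : 0 < α) (hακ : α * κ < 2)
    (Δ : Set (EuclideanSpace ℝ (Fin 2))) (hbd : Bornology.IsBounded Δ)
    (hmeas : MeasurableSet Δ) (hpos : 0 < volume Δ) :
    ∃ C > (0 : ℝ), ∃ r₀ > (0 : ℝ), ∀ r > r₀,
      (∫⁻ u in Δ, ∫⁻ v in Δ,
        ENNReal.ofReal (L (r * dist u v) ^ κ * dist u v ^ (-(α * κ)))) ≤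
      ENNReal.ofReal (C * L r ^ κ) := by
  -- basic setup
  have hκR : (0:ℝ) < (κ:ℝ) := by exact_mod_cast Nat.pos_of_ne_zero (by omega)
  set q : ℝ := α * κ with hqdef
  have hq0 : 0 < q := mul_pos hα hκR
  have hq2 : q < 2 := hακ
  set ε : ℝ := (2 - q) / (2 * κ) with hεdef
  have hε : 0 < ε := div_pos (by linarith) (by linarith)
  have hεκ : ε * κ = (2 - q)/2 := by
    rw [hεdef, div_mul_eq_mul_div, mul_div_mul_right _ _ hκR.ne']
  set p : ℝ := q + ε * κ with hpdef
  have hp0 : 0 < p := by positivity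
  have hp2 : p < 2 := by rw [hpdef, hεκ]; linarith
  -- diameter bound
  obtain ⟨ρ, hρ⟩ := hbd.subset_closedBall (0 : E2)
  set D : ℝ := max (2 * ρ) 1 with hDdef
  have hD1 : (1:ℝ) ≤ D := le_max_right _ _
  have hD0 : (0:ℝ) < D := lt_of_lt_of_le one_pos hD1
  have hdistD : ∀ u ∈ Δ, ∀ v ∈ Δ, dist u v ≤ D := by
    intro u hu v hv
    have h1 : dist u (0:E2) ≤ ρ := mem_closedBall.mp (hρ hu)
    have h2 : dist v (0:E2) ≤ ρ := mem_closedBall.mp (hρ hv)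
    calc dist u v ≤ dist u 0 + dist 0 v := dist_triangle _ _ _
      _ = dist u 0 + dist v 0 := by rw [dist_comm (0:E2) v]
      _ ≤ 2 * ρ := by linarith
      _ ≤ D := le_max_left _ _
  -- Potter bound
  obtain ⟨R, hR1, hPot⟩ := svdib_potter L hLpos hLmeas hLslow hε
  have hR0 : (0:ℝ) < R := lt_of_lt_of_le one_pos hR1
  -- local bound
  obtain ⟨M, hM⟩ := hLloc R hR0
  set M₁ : ℝ := max M 1 with hM₁def
  have hM₁1 : (1:ℝ) ≤ M₁ := le_max_right _ _
  have hM₁0 : (0:ℝ) < M₁ := lt_of_lt_of_le one_pos hM₁1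
  -- constants
  set Bc : ℝ := (volume (closedBall (0 : E2) 1)).toReal with hBcdef
  have hBc0 : 0 < Bc := by
    rw [hBcdef]
    apply ENNReal.toReal_pos (measure_closedBall_pos volume _ one_pos).ne'
      measure_closedBall_lt_top.ne
  set A₀ : ℝ := Real.exp ε * (D^2) ^ ε with hA₀def
  have hA₀0 : 0 < A₀ := mul_pos (Real.exp_pos ε) (Real.rpow_pos_of_pos (by positivity) _)
  set CA : ℝ := A₀^κ * (Bc * (2/(2-p)) * D ^ (2-p)) with hCAdef
  have hCA0 : 0 < CA := by
    apply mul_pos (pow_pos hA₀0 κ)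
    apply mul_pos (mul_pos hBc0 (by apply div_pos <;> linarith))
    exact Real.rpow_pos_of_pos hD0 _
  have hLR0 : 0 < L R := hLpos R hR0.le
  set CB : ℝ := M₁^κ * (Bc * (2/(2-q))) * (Real.exp ε / L R)^κ with hCBdef
  have hCB0 : 0 < CB := by
    apply mul_pos (mul_pos (pow_pos hM₁0 κ) _) (pow_pos (div_pos (Real.exp_pos ε) hLR0) κ)
    exact mul_pos hBc0 (by apply div_pos <;> linarith)
  -- volume
  have hΔfin : volume Δ < ⊤ := lt_of_le_of_lt (measure_mono hρ) measure_closedBall_lt_top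
  set V : ℝ := (volume Δ).toReal with hVdef
  have hV0 : 0 < V := ENNReal.toReal_pos hpos.ne' hΔfin.ne
  refine ⟨(CA + CB) * V, by positivity, R, hR0, ?_⟩
  intro r hr
  have hrR : R ≤ r := hr.le
  have hr0 : (0:ℝ) < r := lt_of_lt_of_le hR0 hrR
  have hr1 : (1:ℝ) ≤ r := le_trans hR1 hrR
  have hLr0 : 0 < L r := hLpos r hr0.le
  set η : ℝ := R / r with hηdef
  have hη0 : 0 < η := div_pos hR0 hr0
  -- pointwise bound
  have hpoint : ∀ u ∈ Δ, ∀ v ∈ Δ,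
      ENNReal.ofReal (L (r * dist u v) ^ κ * dist u v ^ (-(α * κ))) ≤
      ENNReal.ofReal (A₀^κ * L r^κ * dist u v ^ (-p)) +
      (closedBall u η).indicator (fun v => ENNReal.ofReal (M₁^κ * dist u v ^ (-q))) v := by
    intro u hu v hv
    set d : ℝ := dist u v with hddef
    have hd0 : 0 ≤ d := dist_nonneg
    rcases eq_or_lt_of_le hd0 with hd | hd
    · rw [← hd, Real.zero_rpow (by rw [← hqdef]; exact (neg_ne_zero.mpr hq0.ne')), mul_zero]
      simp
    · have hdD : d ≤ D := hdistD u hu v hv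
      rcases le_or_gt R (r * d) with hcase | hcase
      · -- Potter regime
        apply le_trans _ le_self_add
        apply ENNReal.ofReal_le_ofReal
        have hPotter := hPot r hrR (r * d) hcase
        rw [mul_div_cancel_left₀ d hr0.ne',
          (by rw [div_mul_eq_div_div, div_self hr0.ne', one_div] : r / (r*d) = d⁻¹)] at hPotter
        have hmaxle : max d d⁻¹ ≤ D^2 / d := by
          apply max_le
          · rw [le_div_iff₀ hd, sq]
            exact mul_self_le_mul_self hd0 hdD
          · rw [inv_eq_one_div]
            apply div_le_div_of_nonneg_right ?_ hd.le
            exact one_le_pow₀ hD1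
        have hrpow : max d d⁻¹ ^ ε ≤ (D^2) ^ ε * d ^ (-ε) := by
          calc max d d⁻¹ ^ ε ≤ (D^2 / d) ^ ε :=
              Real.rpow_le_rpow (le_max_of_le_left hd0) hmaxle hε.le
            _ = (D^2) ^ ε * d ^ (-ε) := by
                rw [Real.div_rpow (by positivity) hd0, Real.rpow_neg hd0, div_eq_mul_inv]
        have hLrd : L (r * d) ≤ A₀ * L r * d ^ (-ε) := by
          calc L (r * d) ≤ Real.exp ε * L r * max d d⁻¹ ^ ε := hPotter
            _ ≤ Real.exp ε * L r * ((D^2) ^ ε * d ^ (-ε)) := by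
                apply mul_le_mul_of_nonneg_left hrpow (by positivity)
            _ = A₀ * L r * d ^ (-ε) := by rw [hA₀def]; ring
        calc L (r * d) ^ κ * d ^ (-(α * ↑κ))
            ≤ (A₀ * L r * d ^ (-ε)) ^ κ * d ^ (-(α * ↑κ)) := by
              apply mul_le_mul_of_nonneg_right _ (Real.rpow_nonneg hd0 _)
              exact pow_le_pow_left₀ (hLpos _ (by positivity)).le hLrd κ
          _ = A₀^κ * L r^κ * d ^ (-p) := by
              rw [mul_pow, mul_pow, ← Real.rpow_natCast (d ^ (-ε)) κ,
                ← Real.rpow_mul hd0, mul_assoc, ← Real.rpow_add hd,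
                (by rw [hpdef, hqdef]; ring : -ε * (κ:ℝ) + -(α * ↑κ) = -p)]
      · -- local regime
        have hdη : d < η := by
          rw [hηdef, lt_div_iff₀ hr0]
          linarith [mul_comm r d]
        have hvmem : v ∈ closedBall u η := by
          rw [mem_closedBall, dist_comm]
          exact hdη.le
        rw [Set.indicator_of_mem hvmem]
        apply le_add_of_nonneg_of_le (zero_le)
        apply ENNReal.ofReal_le_ofReal
        apply mul_le_mul_of_nonneg_right _ (Real.rpow_nonneg hd0 _)
        have hLrd : L (r * d) ≤ M₁ :=
          le_trans (hM _ ⟨by positivity, hcase.le⟩) (le_max_left _ _)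
        exact pow_le_pow_left₀ (hLpos _ (by positivity)).le hLrd κ
  -- measurability helpers
  have hg1m : ∀ u : E2, Measurable fun v : E2 =>
      ENNReal.ofReal (A₀^κ * L r^κ * dist u v ^ (-p)) := fun u =>
    (((measurable_const.dist measurable_id).pow_const (-p)).const_mul _).ennreal_ofReal
  have hdistm : ∀ (u : E2) (c : ℝ), Measurable fun v : E2 => ENNReal.ofReal (dist u v ^ c) :=
    fun u c => ((measurable_const.dist measurable_id).pow_const c).ennreal_ofReal
  have hrpowm : ∀ c : ℝ, Measurable fun t : ℝ => ENNReal.ofReal (t ^ c) :=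
    fun c => (measurable_id.pow_const c).ennreal_ofReal
  -- the inner integral bound
  have hinner : ∀ u ∈ Δ,
      (∫⁻ v in Δ, ENNReal.ofReal (L (r * dist u v) ^ κ * dist u v ^ (-(α * ↑κ)))) ≤
      ENNReal.ofReal ((CA + CB) * L r ^ κ) := by
    intro u hu
    have hLrκ : (0:ℝ) ≤ A₀^κ * L r^κ := by
      apply mul_nonneg (by positivity) (pow_nonneg hLr0.le κ)
    have hI1 : (∫⁻ v in Δ, ENNReal.ofReal (A₀^κ * L r^κ * dist u v ^ (-p))) ≤
        ENNReal.ofReal (CA * L r ^ κ) := by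
      calc (∫⁻ v in Δ, ENNReal.ofReal (A₀^κ * L r^κ * dist u v ^ (-p)))
          ≤ ∫⁻ v in closedBall u D, ENNReal.ofReal (A₀^κ * L r^κ * dist u v ^ (-p)) := by
            apply lintegral_mono_set
            intro v hv
            rw [mem_closedBall, dist_comm]
            exact hdistD u hu v hv
        _ = ENNReal.ofReal (A₀^κ * L r^κ) *
            ∫⁻ v in closedBall u D, ENNReal.ofReal (dist u v ^ (-p)) := by
            rw [← lintegral_const_mul _ (hdistm u (-p))]
            congr 1
            ext v
            rw [← ENNReal.ofReal_mul hLrκ]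
        _ = ENNReal.ofReal (A₀^κ * L r^κ) *
            ∫⁻ x in closedBall (0:E2) D, ENNReal.ofReal (‖x‖ ^ (-p)) := by
            rw [svdib_translate u D _ (hrpowm (-p))]
        _ ≤ ENNReal.ofReal (A₀^κ * L r^κ) *
            ENNReal.ofReal (Bc * (2/(2-p)) * D ^ (2-p)) := by
            apply mul_le_mul_right (svdib_ballint hp0 hp2 hD0)
        _ = ENNReal.ofReal (CA * L r ^ κ) := by
            rw [← ENNReal.ofReal_mul hLrκ]
            congr 1
            rw [hCAdef]
            ring
    have hI2 : (∫⁻ v in Δ, (closedBall u η).indicator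
          (fun v => ENNReal.ofReal (M₁^κ * dist u v ^ (-q))) v) ≤
        ENNReal.ofReal (CB * L r ^ κ) := by
      have hM₁κ : (0:ℝ) ≤ M₁^κ := by positivity
      have step1 : (∫⁻ v in Δ, (closedBall u η).indicator
            (fun v => ENNReal.ofReal (M₁^κ * dist u v ^ (-q))) v) ≤
          ∫⁻ v in closedBall u η, ENNReal.ofReal (M₁^κ * dist u v ^ (-q)) := by
        rw [lintegral_indicator measurableSet_closedBall,
          Measure.restrict_restrict measurableSet_closedBall]
        exact lintegral_mono' (Measure.restrict_mono inter_subset_left le_rfl) le_rfl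
      have step2 : (∫⁻ v in closedBall u η, ENNReal.ofReal (M₁^κ * dist u v ^ (-q))) ≤
          ENNReal.ofReal (M₁^κ) * ENNReal.ofReal (Bc * (2/(2-q)) * η ^ (2-q)) := by
        calc (∫⁻ v in closedBall u η, ENNReal.ofReal (M₁^κ * dist u v ^ (-q)))
            = ENNReal.ofReal (M₁^κ) * ∫⁻ v in closedBall u η, ENNReal.ofReal (dist u v ^ (-q)) := by
              rw [← lintegral_const_mul _ (hdistm u (-q))]
              congr 1
              ext v
              rw [← ENNReal.ofReal_mul hM₁κ]
          _ = ENNReal.ofReal (M₁^κ) *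
              ∫⁻ x in closedBall (0:E2) η, ENNReal.ofReal (‖x‖ ^ (-q)) := by
              rw [svdib_translate u η _ (hrpowm (-q))]
          _ ≤ _ := mul_le_mul_right (svdib_ballint hq0 hq2 hη0) _
      -- real bound on the small-ball term
      have hη1 : η ≤ 1 := by rw [hηdef, div_le_one hr0]; exact hrR
      have hPotR := hPot r hrR R (le_refl R)
      have hmaxrR : max (R/r) (r/R) = r/R := by
        apply max_eq_right
        calc R/r ≤ 1 := by rw [div_le_one hr0]; exact hrR
          _ ≤ r/R := by rw [le_div_iff₀ hR0]; linarith
      rw [hmaxrR] at hPotR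
      have hprod : (R/r) ^ ε * (r/R) ^ ε = 1 := by
        rw [← Real.mul_rpow (by positivity) (by positivity),
          (by field_simp : (R/r) * (r/R) = 1), Real.one_rpow]
      have hlow : (R/r) ^ ε * L R ≤ Real.exp ε * L r := by
        calc (R/r) ^ ε * L R ≤ (R/r) ^ ε * (Real.exp ε * L r * (r/R) ^ ε) := by
              apply mul_le_mul_of_nonneg_left hPotR (by positivity)
          _ = Real.exp ε * L r * ((R/r) ^ ε * (r/R) ^ ε) := by ring
          _ = Real.exp ε * L r := by rw [hprod, mul_one]
      have hRr : (R/r) ^ ε ≤ Real.exp ε * L r / L R := (le_div_iff₀ hLR0).mpr hlow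
      have hηb : η ^ (2-q) ≤ (Real.exp ε / L R)^κ * L r ^ κ := by
        calc η ^ (2-q) ≤ η ^ (ε * κ) := by
              apply Real.rpow_le_rpow_of_exponent_ge hη0 hη1
              rw [hεκ]; linarith
          _ = ((R/r) ^ ε) ^ κ := by
              rw [hηdef, ← Real.rpow_natCast ((R/r) ^ ε) κ, ← Real.rpow_mul (by positivity)]
          _ ≤ (Real.exp ε * L r / L R) ^ κ :=
              pow_le_pow_left₀ (by positivity) hRr κ
          _ = (Real.exp ε / L R)^κ * L r ^ κ := by
              rw [← mul_pow]
              congr 1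
              ring
      calc (∫⁻ v in Δ, (closedBall u η).indicator
            (fun v => ENNReal.ofReal (M₁^κ * dist u v ^ (-q))) v)
          ≤ ENNReal.ofReal (M₁^κ) * ENNReal.ofReal (Bc * (2/(2-q)) * η ^ (2-q)) :=
            step1.trans step2
        _ = ENNReal.ofReal (M₁^κ * (Bc * (2/(2-q)) * η ^ (2-q))) := by
            rw [← ENNReal.ofReal_mul hM₁κ]
        _ ≤ ENNReal.ofReal (CB * L r ^ κ) := by
            apply ENNReal.ofReal_le_ofReal
            calc M₁^κ * (Bc * (2/(2-q)) * η ^ (2-q))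
                ≤ M₁^κ * (Bc * (2/(2-q)) * ((Real.exp ε / L R)^κ * L r ^ κ)) := by
                  apply mul_le_mul_of_nonneg_left _ hM₁κ
                  apply mul_le_mul_of_nonneg_left hηb
                  exact mul_nonneg hBc0.le (div_nonneg (by norm_num) (by linarith))
              _ = CB * L r ^ κ := by rw [hCBdef]; ring
    calc (∫⁻ v in Δ, ENNReal.ofReal (L (r * dist u v) ^ κ * dist u v ^ (-(α * ↑κ))))
        ≤ ∫⁻ v in Δ, (ENNReal.ofReal (A₀^κ * L r^κ * dist u v ^ (-p)) +
            (closedBall u η).indicator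
              (fun v => ENNReal.ofReal (M₁^κ * dist u v ^ (-q))) v) :=
          setLIntegral_mono' hmeas (fun v hv => hpoint u hu v hv)
      _ = (∫⁻ v in Δ, ENNReal.ofReal (A₀^κ * L r^κ * dist u v ^ (-p))) +
          ∫⁻ v in Δ, (closedBall u η).indicator
            (fun v => ENNReal.ofReal (M₁^κ * dist u v ^ (-q))) v :=
          lintegral_add_left (hg1m u) _
      _ ≤ ENNReal.ofReal (CA * L r ^ κ) + ENNReal.ofReal (CB * L r ^ κ) := add_le_add hI1 hI2
      _ = ENNReal.ofReal ((CA + CB) * L r ^ κ) := by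
          rw [← ENNReal.ofReal_add (mul_nonneg hCA0.le (pow_nonneg hLr0.le κ))
            (mul_nonneg hCB0.le (pow_nonneg hLr0.le κ))]
          congr 1
          ring
  -- outer integral
  calc (∫⁻ u in Δ, ∫⁻ v in Δ,
        ENNReal.ofReal (L (r * dist u v) ^ κ * dist u v ^ (-(α * ↑κ))))
      ≤ ∫⁻ _ in Δ, ENNReal.ofReal ((CA + CB) * L r ^ κ) :=
        setLIntegral_mono' hmeas (fun u hu => hinner u hu)
    _ = ENNReal.ofReal ((CA + CB) * L r ^ κ) * volume Δ := setLIntegral_const _ _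
    _ = ENNReal.ofReal ((CA + CB) * L r ^ κ) * ENNReal.ofReal V := by
        rw [hVdef, ENNReal.ofReal_toReal hΔfin.ne]
    _ = ENNReal.ofReal ((CA + CB) * V * L r ^ κ) := by
        rw [← ENNReal.ofReal_mul (mul_nonneg (by positivity) (pow_nonneg hLr0.le κ))]
        congr 1
        ring
end

section
/- Let L : [0,∞) → (0,∞) be slowly varying at infinity and bounded on every bounded interval, let κ ≥ 1 be an integer and α > 0 with ακ < 2, let Δ ⊂ ℝ² be a bounded measurable set of positive Lebesgue measure, and let h : Δ → ℝ be a bounded measurable function. Then lim_{r→∞} L(r)^{−κ} ∫_Δ ∫_Δ L(r ‖u − v‖)^κ h(u) h(v) ‖u − v‖^{−ακ} du dv = ∫_Δ ∫_Δ h(u) h(v) ‖u − v‖^{−ακ} du dv, and the limit integral is finite. -/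
open MeasureTheory Filter Topology

open scoped ENNReal


open MeasureTheory Filter Topology Set

private lemma meas_rpow_const {α : Type*} [MeasurableSpace α] {g : α → ℝ} (hg : Measurable g)
    (hg0 : ∀ x, 0 ≤ g x) {c : ℝ} (hc : c ≠ 0) : Measurable (fun x => g x ^ c) := by
  have hfe : (fun x => g x ^ c) = fun x => if g x = 0 then 0 else Real.exp (Real.log (g x) * c) := by
    funext x; by_cases h : g x = 0
    · simp [h, Real.zero_rpow hc]
    · rw [if_neg h, Real.rpow_def_of_pos (lt_of_le_of_ne (hg0 x) (Ne.symm h))]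
  rw [hfe]
  exact Measurable.ite (hg (measurableSet_singleton 0)) measurable_const
    ((hg.log.mul_const c).exp)

private lemma oneDim_int {γ : ℝ} (hγ0 : 0 ≤ γ) (hγ1 : γ < 1) {T : ℝ} (hT : 0 < T) :
    IntegrableOn (fun y : ℝ => |y| ^ (-γ)) (Icc (-T) T) := by
  have h1 : IntervalIntegrable (fun y : ℝ => |y| ^ (-γ)) volume 0 T := by
    have h0 := intervalIntegral.intervalIntegrable_rpow' (a := 0) (b := T) (r := -γ)
      (by linarith)
    rw [intervalIntegrable_iff, uIoc_of_le hT.le] at h0 ⊢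
    refine h0.congr_fun (fun y hy => ?_) measurableSet_Ioc
    rw [abs_of_pos hy.1]
  have h2 : IntervalIntegrable (fun y : ℝ => |y| ^ (-γ)) volume (-T) 0 := by
    have := ((IntervalIntegrable.iff_comp_neg (f := fun y : ℝ => |y| ^ (-γ)) (a := 0) (b := T)).mp h1)
    simpa [abs_neg] using this.symm
  have h3 := h2.trans h1
  rw [intervalIntegrable_iff, uIoc_of_le (by linarith : (-T : ℝ) ≤ T)] at h3
  exact h3.congr_set_ae Ioc_ae_eq_Icc.symm

private lemma ball_int {β : ℝ} (hβ0 : 0 < β) (hβ2 : β < 2) {T : ℝ} (hT : 0 < T) :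
    IntegrableOn (fun x : EuclideanSpace ℝ (Fin 2) => ‖x‖ ^ (-β))
      (Metric.closedBall 0 T) := by
  set γ := β / 2 with hγdef
  have hγ0 : 0 < γ := by positivity
  have hγ1 : γ < 1 := by simp only [hγdef]; linarith
  set G : ℝ → ℝ := Set.indicator (Icc (-T) T) (fun y : ℝ => |y| ^ (-γ)) with hGdef
  have hG : Integrable G :=
    (integrable_indicator_iff measurableSet_Icc).2 (oneDim_int hγ0.le hγ1 hT)
  have hg : Integrable (fun y : Fin 2 → ℝ => ∏ i, G (y i)) :=
    Integrable.fintype_prod (fun _ => hG)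
  have hgE : Integrable (fun x : EuclideanSpace ℝ (Fin 2) => ∏ i, G (x i)) :=
    ((PiLp.volume_preserving_ofLp (Fin 2)).integrable_comp
      hg.aestronglyMeasurable).mpr hg
  have hnull : ∀ i : Fin 2, volume {x : EuclideanSpace ℝ (Fin 2) | x i = 0} = 0 := by
    intro i
    have hsm : NullMeasurableSet {y : Fin 2 → ℝ | y i = 0}
        (volume : Measure (Fin 2 → ℝ)) :=
      ((measurable_pi_apply i) (measurableSet_singleton 0)).nullMeasurableSet
    have h1 := (PiLp.volume_preserving_ofLp (Fin 2)).measure_preimage hsm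
    have h2 : volume {y : Fin 2 → ℝ | y i = 0} = 0 := by
      rw [volume_pi]; exact Measure.pi_hyperplane _ i 0
    rw [← h2]; exact h1
  have hae : ∀ᵐ x : EuclideanSpace ℝ (Fin 2), x 0 ≠ 0 ∧ x 1 ≠ 0 := by
    rw [ae_iff]
    refine measure_mono_null (fun x hx => ?_)
      (measure_union_null (hnull 0) (hnull 1))
    simp only [mem_setOf_eq, not_and_or, not_not] at hx
    exact hx.imp (fun h => h) (fun h => h)
  refine Integrable.mono' hgE.integrableOn
    ((meas_rpow_const measurable_norm (fun x => norm_nonneg x)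
      (by linarith : -β ≠ 0)).aestronglyMeasurable.restrict) ?_
  filter_upwards [ae_restrict_mem measurableSet_closedBall, ae_restrict_of_ae hae]
    with x hx hx0
  obtain ⟨h0, h1⟩ := hx0
  set a := |x 0| with hadef
  set b := |x 1| with hbdef
  have ha : 0 < a := abs_pos.2 h0
  have hb : 0 < b := abs_pos.2 h1
  have hnorm : ‖x‖ = Real.sqrt (a ^ 2 + b ^ 2) := by
    rw [EuclideanSpace.norm_eq, Fin.sum_univ_two]
    simp [hadef, hbdef, Real.norm_eq_abs, sq_abs]
  have hxT : ‖x‖ ≤ T := by rwa [← mem_closedBall_zero_iff]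
  have hcoord : ∀ i : Fin 2, |x i| ≤ ‖x‖ := by
    intro i
    rw [EuclideanSpace.norm_eq]
    have h := Finset.single_le_sum (f := fun j => ‖x j‖ ^ 2)
      (fun j _ => sq_nonneg _) (Finset.mem_univ i)
    calc |x i| = Real.sqrt (‖x i‖ ^ 2) := by
          rw [Real.norm_eq_abs, Real.sqrt_sq_eq_abs, abs_abs]
    _ ≤ _ := Real.sqrt_le_sqrt h
  have hmem : ∀ i : Fin 2, x i ∈ Icc (-T) T := by
    intro i; exact abs_le.1 ((hcoord i).trans hxT)
  have hsqrtle : Real.sqrt (a * b) ≤ ‖x‖ := by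
    rw [hnorm]
    exact Real.sqrt_le_sqrt (by nlinarith)
  have hlhs : ‖‖x‖ ^ (-β)‖ = ‖x‖ ^ (-β) := by
    rw [Real.norm_eq_abs, abs_of_nonneg (Real.rpow_nonneg (norm_nonneg _) _)]
  have hprod : ∏ i, G (x i) = a ^ (-γ) * b ^ (-γ) := by
    rw [Fin.prod_univ_two, hGdef]
    rw [Set.indicator_of_mem (hmem 0), Set.indicator_of_mem (hmem 1)]
  rw [hlhs, hprod]
  calc ‖x‖ ^ (-β) ≤ Real.sqrt (a * b) ^ (-β) :=
        Real.rpow_le_rpow_of_nonpos (Real.sqrt_pos.2 (by positivity)) hsqrtle (by linarith)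
    _ = a ^ (-γ) * b ^ (-γ) := by
        rw [Real.sqrt_eq_rpow, ← Real.rpow_mul (by positivity : (0:ℝ) ≤ a * b)]
        rw [show 1 / 2 * (-β) = -γ by rw [hγdef]; ring]
        exact Real.mul_rpow ha.le hb.le

private lemma kernel_int {β : ℝ} (hβ0 : 0 < β) (hβ2 : β < 2)
    {Δ : Set (EuclideanSpace ℝ (Fin 2))} (hmeas : MeasurableSet Δ)
    {R : ℝ} (hR : 1 ≤ R) (hsub : Δ ⊆ Metric.closedBall 0 R) :
    IntegrableOn (fun q : EuclideanSpace ℝ (Fin 2) × EuclideanSpace ℝ (Fin 2) =>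
      dist q.1 q.2 ^ (-β)) (Δ ×ˢ Δ) := by
  have hR0 : (0:ℝ) < R := by linarith
  set K : EuclideanSpace ℝ (Fin 2) → ℝ :=
    Set.indicator (Metric.closedBall 0 (2*R)) (fun w => ‖w‖ ^ (-β)) with hKdef
  have hK : Integrable K := (integrable_indicator_iff measurableSet_closedBall).2
    (ball_int hβ0 hβ2 (by linarith))
  set B : EuclideanSpace ℝ (Fin 2) → ℝ :=
    Set.indicator (Metric.closedBall 0 R) (fun _ => (1:ℝ)) with hBdef
  have hB : Integrable B := (integrable_indicator_iff measurableSet_closedBall).2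
    (integrableOn_const measure_closedBall_lt_top.ne)
  have hprod : Integrable (fun p : _ × _ => K p.1 * B p.2)
      ((volume : Measure (EuclideanSpace ℝ (Fin 2))).prod volume) := hK.mul_prod hB
  have hcomp : Integrable (fun q : EuclideanSpace ℝ (Fin 2) × EuclideanSpace ℝ (Fin 2) =>
      K (q.1 - q.2) * B q.2) := by
    rw [Measure.volume_eq_prod]
    exact ((measurePreserving_sub_prod volume volume).integrable_comp
      hprod.aestronglyMeasurable).mpr hprod
  refine Integrable.mono' hcomp.integrableOn
    ((meas_rpow_const measurable_dist (fun q => dist_nonneg)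
      (by linarith : -β ≠ 0)).aestronglyMeasurable.restrict) ?_
  filter_upwards [ae_restrict_mem (hmeas.prod hmeas)] with q hq
  have hq1 : q.1 ∈ Δ := hq.1
  have hq2 : q.2 ∈ Δ := hq.2
  have h1 : ‖q.1‖ ≤ R := mem_closedBall_zero_iff.1 (hsub hq1)
  have h2 : ‖q.2‖ ≤ R := mem_closedBall_zero_iff.1 (hsub hq2)
  have hmem : q.1 - q.2 ∈ Metric.closedBall (0 : EuclideanSpace ℝ (Fin 2)) (2*R) :=
    mem_closedBall_zero_iff.2 ((norm_sub_le _ _).trans (by linarith))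
  have hK1 : K (q.1 - q.2) = ‖q.1 - q.2‖ ^ (-β) := Set.indicator_of_mem hmem _
  have hB1 : B q.2 = 1 := Set.indicator_of_mem (mem_closedBall_zero_iff.2 h2) _
  rw [Real.norm_eq_abs, abs_of_nonneg (Real.rpow_nonneg dist_nonneg _), hK1, hB1, mul_one,
    dist_eq_norm]
open scoped ENNReal

private noncomputable def ell (L : ℝ → ℝ) : ℝ → ℝ := fun x => Real.log (L (Real.exp x))

private lemma ell_tendsto {L : ℝ → ℝ} (hLpos : ∀ x ≥ (0:ℝ), 0 < L x)
    (hLslow : ∀ t > (0:ℝ), Tendsto (fun r : ℝ => L (t * r) / L r) atTop (𝓝 1)) (u : ℝ) :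
    Tendsto (fun x : ℝ => ell L (x + u) - ell L x) atTop (𝓝 0) := by
  have ht : (0:ℝ) < Real.exp u := Real.exp_pos u
  have h1 := (hLslow _ ht).comp Real.tendsto_exp_atTop
  have h2 : Tendsto (fun x : ℝ => Real.log (L (Real.exp u * Real.exp x) / L (Real.exp x)))
      atTop (𝓝 (Real.log 1)) := h1.log one_ne_zero
  rw [Real.log_one] at h2
  refine h2.congr (fun x => ?_)
  rw [Real.log_div (ne_of_gt (hLpos _ (mul_pos ht (Real.exp_pos x)).le))
    (ne_of_gt (hLpos _ (Real.exp_pos x).le)), ← Real.exp_add, add_comm u x]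
  rfl

private lemma uct {L : ℝ → ℝ} (hLpos : ∀ x ≥ (0:ℝ), 0 < L x) (hLmeas : Measurable L)
    (hLslow : ∀ t > (0:ℝ), Tendsto (fun r : ℝ => L (t * r) / L r) atTop (𝓝 1))
    {ε : ℝ} (hε : 0 < ε) :
    ∃ X : ℝ, ∀ x ≥ X, ∀ u ∈ Icc (0:ℝ) 1, |ell L (x + u) - ell L x| ≤ ε := by
  by_contra hcon
  push_neg at hcon
  choose x hx u hu hgt using fun n : ℕ => hcon (n : ℝ)
  have hxtop : Tendsto x atTop atTop := tendsto_atTop_mono hx tendsto_natCast_atTop_atTop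
  have hytop : Tendsto (fun n => x n + u n) atTop atTop :=
    tendsto_atTop_mono (fun n => le_add_of_nonneg_right (hu n).1) hxtop
  set f : ℕ → ℝ → ℝ := fun n w => ell L (x n + w) - ell L (x n) with hfdef
  set g : ℕ → ℝ → ℝ := fun n w => ell L (x n + u n + w) - ell L (x n + u n) with hgdef
  have hellm : Measurable (ell L) := (hLmeas.comp Real.measurable_exp).log
  have hfm : ∀ n, Measurable (f n) := fun n =>
    (hellm.comp (measurable_id.const_add (x n))).sub measurable_const
  have hgm : ∀ n, Measurable (g n) := fun n =>
    (hellm.comp (measurable_id.const_add (x n + u n))).sub measurable_const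
  set μ : Measure ℝ := volume.restrict (Icc (0:ℝ) 6) with hμdef
  haveI : IsFiniteMeasure μ :=
    ⟨by rw [hμdef, Measure.restrict_apply_univ, Real.volume_Icc]; exact ENNReal.ofReal_lt_top⟩
  have hf0 : ∀ w, Tendsto (fun n => f n w) atTop (𝓝 0) := fun w =>
    (ell_tendsto hLpos hLslow w).comp hxtop
  have hg0 : ∀ w, Tendsto (fun n => g n w) atTop (𝓝 0) := fun w =>
    (ell_tendsto hLpos hLslow w).comp hytop
  have hfT : TendstoInMeasure μ f atTop (fun _ => 0) :=
    tendstoInMeasure_of_tendsto_ae (fun n => (hfm n).aestronglyMeasurable)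
      (Eventually.of_forall fun w => hf0 w)
  have hgT : TendstoInMeasure μ g atTop (fun _ => 0) :=
    tendstoInMeasure_of_tendsto_ae (fun n => (hgm n).aestronglyMeasurable)
      (Eventually.of_forall fun w => hg0 w)
  obtain ⟨n, hfn, hgn⟩ := ((((tendstoInMeasure_iff_dist.1 hfT) (ε/2) (by linarith)).eventually_lt_const
    (by norm_num : (0:ℝ≥0∞) < 1)).and (((tendstoInMeasure_iff_dist.1 hgT) (ε/2) (by linarith)).eventually_lt_const
    (by norm_num : (0:ℝ≥0∞) < 1))).exists
  set Abad := {w : ℝ | ε/2 ≤ dist (f n w) 0} with hAbaddef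
  set Bbad := {w : ℝ | ε/2 ≤ dist (g n w) 0} with hBbaddef
  have hAbadm : MeasurableSet Abad :=
    measurableSet_le measurable_const ((hfm n).dist measurable_const)
  have hBbadm : MeasurableSet Bbad :=
    measurableSet_le measurable_const ((hgm n).dist measurable_const)
  have hA : volume (Abad ∩ Icc (0:ℝ) 6) < 1 := by
    rw [← Measure.restrict_apply hAbadm]; exact hfn
  have hB : volume (Bbad ∩ Icc (0:ℝ) 6) < 1 := by
    rw [← Measure.restrict_apply hBbadm]; exact hgn
  have hvolaux : ∀ S : Set ℝ, volume (S ∩ Icc (0:ℝ) 6) < 1 → 4 < volume (Icc (0:ℝ) 5 \ S) := by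
    intro S hS
    by_contra hle
    push_neg at hle
    have hsub5 : Icc (0:ℝ) 5 ⊆ (Icc (0:ℝ) 5 \ S) ∪ (S ∩ Icc 0 6) := by
      intro w hw
      by_cases hwb : w ∈ S
      · exact Or.inr ⟨hwb, Icc_subset_Icc le_rfl (by norm_num) hw⟩
      · exact Or.inl ⟨hw, hwb⟩
    have h5 : volume (Icc (0:ℝ) 5) ≤ volume (Icc (0:ℝ) 5 \ S) + volume (S ∩ Icc 0 6) :=
      (measure_mono hsub5).trans (measure_union_le _ _)
    rw [Real.volume_Icc] at h5
    have hlt : volume (Icc (0:ℝ) 5 \ S) + volume (S ∩ Icc 0 6) < 4 + 1 :=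
      ENNReal.add_lt_add_of_le_of_lt (ne_top_of_le_ne_top (by norm_num) hle) hle hS
    have : ENNReal.ofReal (5 - 0) < 4 + 1 := lt_of_le_of_lt h5 hlt
    norm_num at this
  have hAvol : 4 < volume (Icc (0:ℝ) 5 \ Abad) := hvolaux _ hA
  have hBvol : 4 < volume (Icc (0:ℝ) 5 \ Bbad) := hvolaux _ hB
  set A := Icc (0:ℝ) 5 \ Abad with hAdef
  set C := {w : ℝ | w - u n ∈ Icc (0:ℝ) 5 \ Bbad} with hCdef
  have hCm : MeasurableSet C :=
    (measurable_id.sub_const (u n)) (measurableSet_Icc.diff hBbadm)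
  have hCvol : 4 < volume C := by
    have hCeq : C = (fun w => w + -(u n)) ⁻¹' (Icc (0:ℝ) 5 \ Bbad) := by
      ext w; simp [hCdef, sub_eq_add_neg]
    rw [hCeq, measure_preimage_add_right]
    exact hBvol
  have hAsub : A ⊆ Icc (0:ℝ) 6 := diff_subset.trans (Icc_subset_Icc le_rfl (by norm_num))
  have hCsub : C ⊆ Icc (0:ℝ) 6 := by
    intro w hw
    have hw1 : w - u n ∈ Icc (0:ℝ) 5 := hw.1
    exact ⟨by linarith [(hu n).1, hw1.1], by linarith [(hu n).2, hw1.2]⟩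
  have hkey : volume (A ∩ C) ≠ 0 := by
    intro h0
    have hui := measure_union_add_inter (μ := volume) A hCm
    rw [h0, add_zero] at hui
    have hle : volume (A ∪ C) ≤ volume (Icc (0:ℝ) 6) :=
      measure_mono (union_subset hAsub hCsub)
    rw [Real.volume_Icc] at hle
    have h8 : (8:ℝ≥0∞) < volume A + volume C := by
      calc (8:ℝ≥0∞) = 4 + 4 := by norm_num
      _ < volume A + volume C := ENNReal.add_lt_add hAvol hCvol
    rw [← hui] at h8
    have hfin : (8:ℝ≥0∞) < ENNReal.ofReal (6 - 0) := h8.trans_le hle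
    norm_num at hfin
  obtain ⟨w, hwA, hwC⟩ := nonempty_of_measure_ne_zero hkey
  have h1 : dist (f n w) 0 < ε/2 := lt_of_not_ge (fun hc => hwA.2 hc)
  have h2 : dist (g n (w - u n)) 0 < ε/2 := lt_of_not_ge (fun hc => hwC.2 hc)
  simp only [hfdef, Real.dist_eq, sub_zero] at h1
  simp only [hgdef, Real.dist_eq, sub_zero] at h2
  have harg : x n + u n + (w - u n) = x n + w := by ring
  rw [harg] at h2
  have htr : |ell L (x n + u n) - ell L (x n)| ≤
      |ell L (x n + u n) - ell L (x n + w)| + |ell L (x n + w) - ell L (x n)| :=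
    abs_sub_le _ _ _
  rw [abs_sub_comm (ell L (x n + u n)) (ell L (x n + w))] at htr
  have := hgt n
  linarith

private lemma chain {L : ℝ → ℝ} {X ε : ℝ} (hε : 0 ≤ ε)
    (hstep : ∀ x ≥ X, ∀ u ∈ Icc (0:ℝ) 1, |ell L (x + u) - ell L x| ≤ ε) :
    ∀ x ≥ X, ∀ s, 0 ≤ s → |ell L (x + s) - ell L x| ≤ ε * (s + 1) := by
  have hnat : ∀ n : ℕ, ∀ x ≥ X, |ell L (x + n) - ell L x| ≤ ε * n := by
    intro n
    induction n with
    | zero => intro x _; simp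
    | succ n ih =>
      intro x hx
      have h1 := hstep (x + n) (by linarith [Nat.cast_nonneg (α := ℝ) n]) 1
        ⟨zero_le_one, le_rfl⟩
      have h2 := ih x hx
      have harg : x + ((n + 1 : ℕ) : ℝ) = x + (n:ℝ) + 1 := by push_cast; ring
      rw [harg]
      have hsplit : ell L (x + (n:ℝ) + 1) - ell L x =
          (ell L (x + (n:ℝ) + 1) - ell L (x + n)) + (ell L (x + n) - ell L x) := by ring
      rw [hsplit]
      refine (abs_add_le _ _).trans ?_
      push_cast
      linarith
  intro x hx s hs
  set n := ⌊s⌋₊ with hndef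
  have hn1 : (n:ℝ) ≤ s := Nat.floor_le hs
  have hn2 : s < n + 1 := Nat.lt_floor_add_one s
  have h1 := hstep (x + n) (by linarith [Nat.cast_nonneg (α := ℝ) n]) (s - n)
    ⟨by linarith, by linarith⟩
  have h2 := hnat n x hx
  rw [show x + (n:ℝ) + (s - n) = x + s by ring] at h1
  have habs : |ell L (x+s) - ell L x| ≤
      |ell L (x+s) - ell L (x+n)| + |ell L (x+n) - ell L x| := abs_sub_le _ _ _
  have hmul : ε * n ≤ ε * s := mul_le_mul_of_nonneg_left hn1 hε
  nlinarith

private lemma potter {L : ℝ → ℝ} (hLpos : ∀ x ≥ (0:ℝ), 0 < L x) (hLmeas : Measurable L)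
    (hLslow : ∀ t > (0:ℝ), Tendsto (fun r : ℝ => L (t * r) / L r) atTop (𝓝 1))
    (hLloc : ∀ T > (0:ℝ), ∃ M : ℝ, ∀ x ∈ Icc (0:ℝ) T, L x ≤ M)
    {ε : ℝ} (hε : 0 < ε) {D : ℝ} (hD : 1 ≤ D) :
    ∃ r1 C : ℝ, 1 ≤ r1 ∧ 0 < C ∧ ∀ r, r1 ≤ r → ∀ d, 0 < d → d ≤ D →
      L (r * d) ≤ C * d ^ (-ε) * L r := by
  obtain ⟨X0, hX0⟩ := uct hLpos hLmeas hLslow hε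
  set X := max X0 0 with hXdef
  have hstep : ∀ x ≥ X, ∀ u ∈ Icc (0:ℝ) 1, |ell L (x+u) - ell L x| ≤ ε :=
    fun x hx => hX0 x (le_trans (le_max_left _ _) hx)
  have hchain := chain hε.le hstep
  set r1 := Real.exp X with hr1def
  have hr1 : 1 ≤ r1 := by
    rw [hr1def]
    calc (1:ℝ) = Real.exp 0 := Real.exp_zero.symm
    _ ≤ Real.exp X := Real.exp_le_exp.2 (le_max_right _ _)
  have hr1pos : 0 < r1 := Real.exp_pos X
  obtain ⟨M1, hM1⟩ := hLloc r1 hr1pos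
  have hLr1 : 0 < L r1 := hLpos r1 hr1pos.le
  have hM1pos : 0 < M1 := lt_of_lt_of_le (hLpos 0 le_rfl) (hM1 0 ⟨le_rfl, hr1pos.le⟩)
  have habs : ∀ y z : ℝ, X ≤ y → X ≤ z → |ell L y - ell L z| ≤ ε * (|y - z| + 1) := by
    intro y z hy hz
    rcases le_total z y with hzy | hzy
    · have h := hchain z hz (y - z) (by linarith)
      rw [show z + (y - z) = y by ring] at h
      rwa [abs_of_nonneg (by linarith : (0:ℝ) ≤ y - z)]
    · have h := hchain y hy (z - y) (by linarith)
      rw [show y + (z - y) = z by ring] at h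
      rw [abs_sub_comm]
      rwa [abs_sub_comm y z, abs_of_nonneg (by linarith : (0:ℝ) ≤ z - y)]
  have hlog : ∀ r : ℝ, r1 ≤ r → X ≤ Real.log r := by
    intro r hr
    have hrpos : 0 < r := lt_of_lt_of_le hr1pos hr
    rw [hr1def] at hr
    calc X = Real.log (Real.exp X) := (Real.log_exp X).symm
    _ ≤ Real.log r := (Real.log_le_log_iff (Real.exp_pos X) hrpos).2 hr
  have hLlog : ∀ r : ℝ, 0 < r → ell L (Real.log r) = Real.log (L r) := by
    intro r hr
    show Real.log (L (Real.exp (Real.log r))) = _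
    rw [Real.exp_log hr]
  set C := Real.exp ε * D ^ (2*ε) + M1 * Real.exp ε / L r1 with hCdef
  have hC1 : (0:ℝ) < Real.exp ε * D ^ (2*ε) := by positivity
  have hC2 : (0:ℝ) < M1 * Real.exp ε / L r1 := by positivity
  refine ⟨r1, C, hr1, by positivity, ?_⟩
  intro r hr d hd hdD
  have hrpos : 0 < r := lt_of_lt_of_le hr1pos hr
  have hLr : 0 < L r := hLpos r hrpos.le
  have hdneg : 0 < d ^ (-ε) := Real.rpow_pos_of_pos hd _
  by_cases hcase : r1 ≤ r * d
  · have hrd : 0 < r * d := mul_pos hrpos hd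
    have h := habs (Real.log (r*d)) (Real.log r) (hlog _ hcase) (hlog _ hr)
    rw [hLlog _ hrd, hLlog _ hrpos,
      show Real.log (r * d) - Real.log r = Real.log d by
        rw [Real.log_mul (ne_of_gt hrpos) (ne_of_gt hd)]; ring] at h
    have hup : Real.log (L (r*d)) ≤ Real.log (L r) + ε * (|Real.log d| + 1) := by
      have h' := (abs_le.1 h).2; linarith
    have hexp : L (r * d) ≤ L r * Real.exp (ε * (|Real.log d| + 1)) := by
      rw [show L (r*d) = Real.exp (Real.log (L (r*d))) from (Real.exp_log (hLpos _ hrd.le)).symm,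
        show L r * Real.exp (ε * (|Real.log d| + 1))
            = Real.exp (Real.log (L r) + ε * (|Real.log d| + 1)) from by
          rw [Real.exp_add, Real.exp_log hLr]]
      exact Real.exp_le_exp.2 hup
    have hs : Real.exp (ε * |Real.log d|) ≤ D ^ (2*ε) * d ^ (-ε) := by
      rcases le_total d 1 with hd1 | hd1
      · have hld : Real.log d ≤ 0 := Real.log_nonpos hd.le hd1
        rw [abs_of_nonpos hld]
        have : Real.exp (ε * -Real.log d) = d ^ (-ε) := by
          rw [Real.rpow_def_of_pos hd]; ring_nf
        rw [this]
        have hD1 : (1:ℝ) ≤ D ^ (2*ε) := by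
          calc (1:ℝ) = D ^ (0:ℝ) := (Real.rpow_zero D).symm
          _ ≤ D ^ (2*ε) := Real.rpow_le_rpow_of_exponent_le hD (by linarith)
        nlinarith
      · have hld : 0 ≤ Real.log d := Real.log_nonneg hd1
        rw [abs_of_nonneg hld]
        have h1' : Real.exp (ε * Real.log d) = d ^ ε := by
          rw [Real.rpow_def_of_pos hd]; ring_nf
        have h2' : d ^ ε = d ^ (2*ε) * d ^ (-ε) := by
          rw [← Real.rpow_add hd]; ring_nf
        have h3' : d ^ (2*ε) ≤ D ^ (2*ε) := Real.rpow_le_rpow hd.le hdD (by positivity)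
        rw [h1', h2']
        exact mul_le_mul_of_nonneg_right h3' hdneg.le
    have hbound : Real.exp (ε * (|Real.log d| + 1)) ≤ Real.exp ε * (D ^ (2*ε) * d ^ (-ε)) := by
      calc Real.exp (ε * (|Real.log d| + 1))
          = Real.exp ε * Real.exp (ε * |Real.log d|) := by
            rw [mul_add, mul_one, Real.exp_add, mul_comm]
      _ ≤ Real.exp ε * (D ^ (2*ε) * d ^ (-ε)) :=
            mul_le_mul_of_nonneg_left hs (Real.exp_pos ε).le
    calc L (r*d) ≤ L r * (Real.exp ε * (D ^ (2*ε) * d ^ (-ε))) :=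
          hexp.trans (mul_le_mul_of_nonneg_left hbound hLr.le)
    _ = (Real.exp ε * D ^ (2*ε)) * d ^ (-ε) * L r := by ring
    _ ≤ C * d ^ (-ε) * L r := by
          apply mul_le_mul_of_nonneg_right _ hLr.le
          apply mul_le_mul_of_nonneg_right _ hdneg.le
          rw [hCdef]; linarith
  · push_neg at hcase
    have hrd0 : (0:ℝ) ≤ r * d := (mul_pos hrpos hd).le
    have hLrd : L (r * d) ≤ M1 := hM1 _ ⟨hrd0, hcase.le⟩
    have h := habs (Real.log r) X (hlog _ hr) le_rfl
    have hellX : ell L X = Real.log (L r1) := by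
      show Real.log (L (Real.exp X)) = _
      rw [← hr1def]
    rw [hLlog _ hrpos, hellX] at h
    have hXlogr : X ≤ Real.log r := hlog _ hr
    rw [abs_of_nonneg (by linarith : (0:ℝ) ≤ Real.log r - X)] at h
    have hlow : Real.log (L r1) - ε * (Real.log r - X + 1) ≤ Real.log (L r) := by
      have h' := (abs_le.1 h).1; linarith
    have hLrlow : L r1 * Real.exp (-(ε * (Real.log r - X + 1))) ≤ L r := by
      rw [show L r1 * Real.exp (-(ε * (Real.log r - X + 1)))
          = Real.exp (Real.log (L r1) + -(ε * (Real.log r - X + 1))) from by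
        rw [Real.exp_add, Real.exp_log hLr1],
        show L r = Real.exp (Real.log (L r)) from (Real.exp_log hLr).symm]
      exact Real.exp_le_exp.2 (by linarith)
    have hstrict : Real.log r - X ≤ -Real.log d := by
      have hlt : Real.log (r * d) ≤ Real.log r1 :=
        (Real.log_le_log_iff (mul_pos hrpos hd) hr1pos).2 hcase.le
      rw [Real.log_mul (ne_of_gt hrpos) (ne_of_gt hd), hr1def, Real.log_exp] at hlt
      linarith
    have hexpge : d ^ ε ≤ Real.exp (-(ε * (Real.log r - X))) := by
      rw [Real.rpow_def_of_pos hd]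
      apply Real.exp_le_exp.2
      nlinarith
    set c2 := M1 * Real.exp ε / L r1 with hc2def
    have h4 : L r1 * Real.exp (-ε) * d ^ ε ≤ L r := by
      calc L r1 * Real.exp (-ε) * d ^ ε
          ≤ L r1 * Real.exp (-ε) * Real.exp (-(ε * (Real.log r - X))) :=
            mul_le_mul_of_nonneg_left hexpge (by positivity)
      _ = L r1 * Real.exp (-(ε * (Real.log r - X + 1))) := by
            rw [mul_assoc, ← Real.exp_add]; ring_nf
      _ ≤ L r := hLrlow
    have hde : d ^ (-ε) * d ^ ε = 1 := by
      rw [← Real.rpow_add hd]; norm_num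
    have h5 : c2 * d ^ (-ε) * (L r1 * Real.exp (-ε) * d ^ ε) ≤ c2 * d ^ (-ε) * L r :=
      mul_le_mul_of_nonneg_left h4 (by positivity)
    have h6 : c2 * d ^ (-ε) * (L r1 * Real.exp (-ε) * d ^ ε) = M1 := by
      calc c2 * d ^ (-ε) * (L r1 * Real.exp (-ε) * d ^ ε)
          = M1 * (Real.exp ε * Real.exp (-ε)) * (L r1 / L r1) * (d ^ (-ε) * d ^ ε) := by
            rw [hc2def]; ring
      _ = M1 := by
            rw [← Real.exp_add, add_neg_cancel, Real.exp_zero, div_self (ne_of_gt hLr1), hde]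
            ring
    have key : M1 ≤ c2 * d ^ (-ε) * L r := by rw [← h6]; exact h5
    calc L (r*d) ≤ M1 := hLrd
    _ ≤ c2 * d ^ (-ε) * L r := key
    _ ≤ C * d ^ (-ε) * L r := by
          apply mul_le_mul_of_nonneg_right _ hLr.le
          apply mul_le_mul_of_nonneg_right _ hdneg.le
          rw [hCdef, hc2def]; linarith

/-- For a slowly varying `L`, an integer `κ ≥ 1`, `α > 0` with `ακ < 2`, a bounded measurable
`Δ ⊂ ℝ²` of positive measure and a bounded measurable `h` on `Δ`, the weighted integral with
kernel `L(r‖u−v‖)^κ ‖u−v‖^{−ακ}`, normalised by `L(r)^κ`, converges as `r → ∞` to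
`∫_Δ ∫_Δ h(u) h(v) ‖u−v‖^{−ακ} du dv`, which is finite. -/
theorem slowly_varying_double_integral_limit
    (L : ℝ → ℝ) (hLpos : ∀ x ≥ (0 : ℝ), 0 < L x) (hLmeas : Measurable L)
    (hLslow : ∀ t > (0 : ℝ), Tendsto (fun r : ℝ => L (t * r) / L r) atTop (𝓝 1))
    (hLloc : ∀ T > (0 : ℝ), ∃ M : ℝ, ∀ x ∈ Set.Icc (0 : ℝ) T, L x ≤ M)
    (κ : ℕ) (hκ : 1 ≤ κ) (α : ℝ) (hα : 0 < α) (hακ : α * κ < 2)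
    (Δ : Set (EuclideanSpace ℝ (Fin 2))) (hbd : Bornology.IsBounded Δ)
    (hmeas : MeasurableSet Δ) (hpos : 0 < volume Δ)
    (h : EuclideanSpace ℝ (Fin 2) → ℝ) (hhmeas : Measurable h)
    (hhbdd : ∃ M : ℝ, ∀ x ∈ Δ, |h x| ≤ M) :
    IntegrableOn
      (fun q : EuclideanSpace ℝ (Fin 2) × EuclideanSpace ℝ (Fin 2) =>
        h q.1 * h q.2 * dist q.1 q.2 ^ (-(α * κ))) (Δ ×ˢ Δ) ∧
    Tendsto (fun r : ℝ =>
        (∫ q in Δ ×ˢ Δ, L (r * dist q.1 q.2) ^ κ * h q.1 * h q.2 * dist q.1 q.2 ^ (-(α * κ))) /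
          L r ^ κ)
      atTop
      (𝓝 (∫ q in Δ ×ˢ Δ, h q.1 * h q.2 * dist q.1 q.2 ^ (-(α * κ)))) := by
  
  classical
  obtain ⟨M, hM⟩ := hhbdd
  have hΔne : Δ.Nonempty := nonempty_of_measure_ne_zero hpos.ne'
  have hM0 : 0 ≤ M := le_trans (abs_nonneg _) (hM _ hΔne.choose_spec)
  obtain ⟨R0, hR0⟩ :=
    (Metric.isBounded_iff_subset_closedBall (0 : EuclideanSpace ℝ (Fin 2))).1 hbd
  set R := max R0 1 with hRdef
  have hR1 : 1 ≤ R := le_max_right _ _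
  have hsub : Δ ⊆ Metric.closedBall 0 R :=
    hR0.trans (Metric.closedBall_subset_closedBall (le_max_left _ _))
  have hκR : (1:ℝ) ≤ (κ:ℝ) := by exact_mod_cast hκ
  have hκpos : (0:ℝ) < (κ:ℝ) := by linarith
  have hβ0 : 0 < α * (κ:ℝ) := mul_pos hα hκpos
  have hβ2 : α * (κ:ℝ) < 2 := hακ
  have hdistm : Measurable
      (fun q : EuclideanSpace ℝ (Fin 2) × EuclideanSpace ℝ (Fin 2) =>
        dist q.1 q.2 ^ (-(α * (κ:ℝ)))) :=
    meas_rpow_const measurable_dist (fun _ => dist_nonneg) (by intro hcon; rw [neg_eq_zero] at hcon; linarith)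
  have hker := kernel_int hβ0 hβ2 hmeas hR1 hsub
  have hbase_meas : Measurable
      (fun q : EuclideanSpace ℝ (Fin 2) × EuclideanSpace ℝ (Fin 2) =>
        h q.1 * h q.2 * dist q.1 q.2 ^ (-(α * (κ:ℝ)))) :=
    ((hhmeas.comp measurable_fst).mul (hhmeas.comp measurable_snd)).mul hdistm
  have part1 : IntegrableOn
      (fun q : EuclideanSpace ℝ (Fin 2) × EuclideanSpace ℝ (Fin 2) =>
        h q.1 * h q.2 * dist q.1 q.2 ^ (-(α * κ))) (Δ ×ˢ Δ) := by
    refine Integrable.mono' (hker.const_mul (M*M))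
      hbase_meas.aestronglyMeasurable.restrict ?_
    filter_upwards [ae_restrict_mem (hmeas.prod hmeas)] with q hq
    have h1 : |h q.1| ≤ M := hM _ hq.1
    have h2 : |h q.2| ≤ M := hM _ hq.2
    have hd0 : 0 ≤ dist q.1 q.2 ^ (-(α*(κ:ℝ))) := Real.rpow_nonneg dist_nonneg _
    rw [Real.norm_eq_abs, abs_mul, abs_mul, abs_of_nonneg hd0]
    refine mul_le_mul_of_nonneg_right ?_ hd0
    exact mul_le_mul h1 h2 (abs_nonneg _) hM0
  refine ⟨part1, ?_⟩
  set ε' := (2 - α * (κ:ℝ))/(2*(κ:ℝ)) with hε'def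
  have hε'pos : 0 < ε' := by
    apply div_pos; · linarith
    · positivity
  set β' := α * (κ:ℝ) + ε' * (κ:ℝ) with hβ'def
  have hε'κ : ε' * (κ:ℝ) = (2 - α * (κ:ℝ))/2 := by
    rw [hε'def]; field_simp
  have hβ'2 : β' < 2 := by rw [hβ'def, hε'κ]; linarith
  have hβ'0 : 0 < β' := by
    have : 0 < ε' * (κ:ℝ) := mul_pos hε'pos hκpos
    rw [hβ'def]; linarith
  set D := 2 * R with hDdef
  have hD1 : 1 ≤ D := by rw [hDdef]; linarith
  obtain ⟨r1, C, hr1, hCpos, hpot⟩ := potter hLpos hLmeas hLslow hLloc hε'pos hD1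
  have hker' := kernel_int hβ'0 hβ'2 hmeas hR1 hsub
  set μ := (volume : Measure
    (EuclideanSpace ℝ (Fin 2) × EuclideanSpace ℝ (Fin 2))).restrict (Δ ×ˢ Δ) with hμdef
  have hdiag : (volume : Measure
      (EuclideanSpace ℝ (Fin 2) × EuclideanSpace ℝ (Fin 2))) {q | q.1 = q.2} = 0 := by
    have hpre : {q : EuclideanSpace ℝ (Fin 2) × EuclideanSpace ℝ (Fin 2) | q.1 = q.2}
        = (fun q : EuclideanSpace ℝ (Fin 2) × EuclideanSpace ℝ (Fin 2) => (q.1 - q.2, q.2)) ⁻¹'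
          (({0} : Set (EuclideanSpace ℝ (Fin 2))) ×ˢ Set.univ) := by
      ext q
      simp [sub_eq_zero, eq_comm]
    rw [Measure.volume_eq_prod, hpre,
      (measurePreserving_sub_prod volume volume).measure_preimage
        (((measurableSet_singleton _).prod MeasurableSet.univ).nullMeasurableSet),
      Measure.prod_prod, measure_singleton, zero_mul]
  have hae_ne : ∀ᵐ q : EuclideanSpace ℝ (Fin 2) × EuclideanSpace ℝ (Fin 2) ∂μ,
      q.1 ≠ q.2 := by
    refine ae_restrict_of_ae ?_
    rw [ae_iff]
    simpa using hdiag
  have hDCT := tendsto_integral_filter_of_dominated_convergence (μ := μ) (l := atTop)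
    (F := fun (r : ℝ) q => (L (r * dist q.1 q.2) ^ κ * h q.1 * h q.2 *
      dist q.1 q.2 ^ (-(α * (κ:ℝ)))) / L r ^ κ)
    (f := fun q => h q.1 * h q.2 * dist q.1 q.2 ^ (-(α * (κ:ℝ))))
    (bound := fun q => (C^κ * (M*M)) * dist q.1 q.2 ^ (-β'))
    ?_ ?_ ?_ ?_
  · refine hDCT.congr fun r => ?_
    exact integral_div _ _
  · refine Eventually.of_forall fun r => ?_
    refine Measurable.aestronglyMeasurable ?_
    exact ((((hLmeas.comp (measurable_dist.const_mul r)).pow_const κ).mul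
      (hhmeas.comp measurable_fst)).mul (hhmeas.comp measurable_snd)).mul hdistm |>.div_const _
  · refine (eventually_ge_atTop r1).mono fun r hr => ?_
    filter_upwards [ae_restrict_mem (hmeas.prod hmeas), hae_ne] with q hq hne
    have hd : 0 < dist q.1 q.2 := dist_pos.2 hne
    have hdD : dist q.1 q.2 ≤ D := by
      have h1 : ‖q.1‖ ≤ R := mem_closedBall_zero_iff.1 (hsub hq.1)
      have h2 : ‖q.2‖ ≤ R := mem_closedBall_zero_iff.1 (hsub hq.2)
      rw [dist_eq_norm, hDdef]
      exact (norm_sub_le _ _).trans (by linarith)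
    have hrpos : 0 < r := lt_of_lt_of_le (by linarith) hr
    have hLrpos : 0 < L r := hLpos r hrpos.le
    have hLrdpos : 0 < L (r * dist q.1 q.2) := hLpos _ (by positivity)
    have hpowpos : 0 < L r ^ κ := pow_pos hLrpos κ
    have hP := hpot r hr _ hd hdD
    have hPκ : L (r * dist q.1 q.2) ^ κ ≤ (C * dist q.1 q.2 ^ (-ε') * L r)^κ :=
      pow_le_pow_left₀ hLrdpos.le hP κ
    rw [Real.norm_eq_abs, abs_div, abs_of_pos hpowpos, div_le_iff₀ hpowpos]
    have habs_num : |L (r * dist q.1 q.2) ^ κ * h q.1 * h q.2 *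
        dist q.1 q.2 ^ (-(α * (κ:ℝ)))| ≤
        L (r * dist q.1 q.2)^κ * M * M * dist q.1 q.2 ^ (-(α * (κ:ℝ))) := by
      rw [abs_mul, abs_mul, abs_mul, abs_of_nonneg (pow_nonneg hLrdpos.le κ),
        abs_of_nonneg (Real.rpow_nonneg hd.le _)]
      refine mul_le_mul_of_nonneg_right ?_ (Real.rpow_nonneg hd.le _)
      refine mul_le_mul ?_ (hM _ hq.2) (abs_nonneg _) ?_
      · exact mul_le_mul_of_nonneg_left (hM _ hq.1) (pow_nonneg hLrdpos.le κ)
      · positivity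
    calc |L (r * dist q.1 q.2) ^ κ * h q.1 * h q.2 * dist q.1 q.2 ^ (-(α * (κ:ℝ)))|
        ≤ L (r * dist q.1 q.2)^κ * M * M * dist q.1 q.2 ^ (-(α * (κ:ℝ))) := habs_num
    _ ≤ (C * dist q.1 q.2 ^ (-ε') * L r)^κ * M * M * dist q.1 q.2 ^ (-(α * (κ:ℝ))) := by
        refine mul_le_mul_of_nonneg_right ?_ (Real.rpow_nonneg hd.le _)
        exact mul_le_mul_of_nonneg_right (mul_le_mul_of_nonneg_right hPκ hM0) hM0
    _ = (C^κ * (M*M)) * dist q.1 q.2 ^ (-β') * L r ^ κ := by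
        rw [mul_pow, mul_pow]
        have hpow : (dist q.1 q.2 ^ (-ε'))^κ = dist q.1 q.2 ^ (-(ε' * (κ:ℝ))) := by
          rw [← Real.rpow_natCast (dist q.1 q.2 ^ (-ε')) κ, ← Real.rpow_mul hd.le]
          ring_nf
        rw [hpow]
        have hsum : dist q.1 q.2 ^ (-(ε' * (κ:ℝ))) * dist q.1 q.2 ^ (-(α * (κ:ℝ)))
            = dist q.1 q.2 ^ (-β') := by
          rw [← Real.rpow_add hd, hβ'def]; ring_nf
        calc C^κ * (dist q.1 q.2 ^ (-(ε' * (κ:ℝ))))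
              * L r ^ κ * M * M * dist q.1 q.2 ^ (-(α * (κ:ℝ)))
            = (C^κ * (M*M)) * (dist q.1 q.2 ^ (-(ε' * (κ:ℝ)))
              * dist q.1 q.2 ^ (-(α * (κ:ℝ)))) * L r ^ κ := by ring
        _ = (C^κ * (M*M)) * dist q.1 q.2 ^ (-β') * L r ^ κ := by rw [hsum]
  · exact hker'.const_mul _
  · filter_upwards [hae_ne] with q hne
    have hd : 0 < dist q.1 q.2 := dist_pos.2 hne
    have h1 := hLslow _ hd
    have h2 : Tendsto (fun r => (L (dist q.1 q.2 * r)/L r)^κ *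
        (h q.1 * h q.2 * dist q.1 q.2 ^ (-(α * (κ:ℝ))))) atTop
        (𝓝 (h q.1 * h q.2 * dist q.1 q.2 ^ (-(α * (κ:ℝ))))) := by
      have := (h1.pow κ).mul_const (h q.1 * h q.2 * dist q.1 q.2 ^ (-(α * (κ:ℝ))))
      rwa [one_pow, one_mul] at this
    have hEq : (fun r => (L (dist q.1 q.2 * r)/L r)^κ *
        (h q.1 * h q.2 * dist q.1 q.2 ^ (-(α * (κ:ℝ))))) =ᶠ[atTop]
        (fun r => (L (r * dist q.1 q.2) ^ κ * h q.1 * h q.2 *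
          dist q.1 q.2 ^ (-(α * (κ:ℝ)))) / L r ^ κ) := by
      filter_upwards [eventually_gt_atTop (0:ℝ)] with r hr
      have hLr : L r ≠ 0 := ne_of_gt (hLpos r hr.le)
      rw [div_pow, mul_comm (dist q.1 q.2) r, div_mul_eq_mul_div]
      congr 1
      ring
    exact h2.congr' hEq
end
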